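/- Let 0 ≤ a < b ≤ 1 and define c(x,t) := (2/π) Σ_{n=1}^{∞} (1/n)(cos(nπa) − cos(nπb)) sin(nπx) exp(−n²π²t). Then for every t > 0 the series converges absolutely for all x ∈ ℝ, and the function c satisfies the one-dimensional heat equation ∂c/∂t − ∂²c/∂x² = 0 at every point (x,t) with x ∈ (0,1) and t > 0, together with the homogeneous Dirichlet boundary conditions c(0,t) = c(1,t) = 0 for every t > 0. -/

import Mathlib

open Set
open Real Filter

/-- The `n`-th term (`n ≥ 1`) of the series solution of the 1D heat problem with
non-uniform initial condition (initial data `1` on `[a,b]`, `0` otherwise). -/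
noncomputable def heatTerm1D (a b : ℝ) (n : ℕ) (x t : ℝ) : ℝ :=
  (1 / (n : ℝ)) * (Real.cos ((n : ℝ) * Real.pi * a) - Real.cos ((n : ℝ) * Real.pi * b)) *
    Real.sin ((n : ℝ) * Real.pi * x) * Real.exp (-(n : ℝ) ^ 2 * Real.pi ^ 2 * t)

/-- The series solution
`c(x,t) = (2/π) Σ_{n=1}^∞ (1/n)(cos(nπa) − cos(nπb)) sin(nπx) exp(−n²π²t)`. -/
noncomputable def heatSol1D (a b : ℝ) (x t : ℝ) : ℝ :=
  (2 / Real.pi) * ∑' n : ℕ, heatTerm1D a b (n + 1) x t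

lemma term_eq (a b : ℝ) (n : ℕ) (x t : ℝ) :
    heatTerm1D a b (n + 1) x t =
      (1 / ((n : ℝ) + 1)) *
        (Real.cos (((n : ℝ) + 1) * Real.pi * a) - Real.cos (((n : ℝ) + 1) * Real.pi * b)) *
        Real.sin (((n : ℝ) + 1) * Real.pi * x) *
        Real.exp (-((n : ℝ) + 1) ^ 2 * Real.pi ^ 2 * t) := by
  simp only [heatTerm1D]
  push_cast
  ring_nf

lemma abs_D_le (a b k : ℝ) : |Real.cos (k * a) - Real.cos (k * b)| ≤ 2 := by
  have h1 := Real.abs_cos_le_one (k * a)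
  have h2 := Real.abs_cos_le_one (k * b)
  calc |Real.cos (k * a) - Real.cos (k * b)| ≤ |Real.cos (k * a)| + |Real.cos (k * b)| :=
        abs_sub _ _
    _ ≤ 2 := by linarith

lemma term_abs_le' (a b : ℝ) (n : ℕ) (x t : ℝ) :
    |heatTerm1D a b (n + 1) x t| ≤
      (1 / ((n : ℝ) + 1)) * 2 * Real.exp (-((n : ℝ) + 1) ^ 2 * Real.pi ^ 2 * t) := by
  rw [term_eq]
  have hn : (0:ℝ) < (n : ℝ) + 1 := by positivity
  rw [abs_mul, abs_mul, abs_mul, Real.abs_exp]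
  have h1 : |1 / ((n : ℝ) + 1)| = 1 / ((n : ℝ) + 1) := abs_of_pos (by positivity)
  rw [h1]
  have h2 := abs_D_le a b (((n : ℝ) + 1) * Real.pi)
  have h3 := Real.abs_sin_le_one (((n : ℝ) + 1) * Real.pi * x)
  have he : (0:ℝ) < Real.exp (-((n : ℝ) + 1) ^ 2 * Real.pi ^ 2 * t) := Real.exp_pos _
  calc 1 / ((n : ℝ) + 1) * |Real.cos (((n : ℝ) + 1) * Real.pi * a) - Real.cos (((n : ℝ) + 1) * Real.pi * b)| * |Real.sin (((n : ℝ) + 1) * Real.pi * x)| * Real.exp (-((n : ℝ) + 1) ^ 2 * Real.pi ^ 2 * t)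
      ≤ 1 / ((n : ℝ) + 1) * 2 * 1 * Real.exp (-((n : ℝ) + 1) ^ 2 * Real.pi ^ 2 * t) := by gcongr
    _ = (1 / ((n : ℝ) + 1)) * 2 * Real.exp (-((n : ℝ) + 1) ^ 2 * Real.pi ^ 2 * t) := by ring

lemma term_abs_le (a b : ℝ) (n : ℕ) (x t : ℝ) :
    |heatTerm1D a b (n + 1) x t| ≤ 2 * Real.exp (-((n : ℝ) + 1) ^ 2 * Real.pi ^ 2 * t) := by
  refine (term_abs_le' a b n x t).trans ?_
  have hn : (0:ℝ) < (n : ℝ) + 1 := by positivity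
  have h1 : 1 / ((n : ℝ) + 1) ≤ 1 := by
    rw [div_le_one hn]; linarith
  have he : (0:ℝ) ≤ Real.exp (-((n : ℝ) + 1) ^ 2 * Real.pi ^ 2 * t) := (Real.exp_pos _).le
  nlinarith

lemma summable_sq_exp {t : ℝ} (ht : 0 < t) :
    Summable (fun n : ℕ => ((n : ℝ) + 1) ^ 2 * Real.exp (-((n : ℝ) + 1) ^ 2 * Real.pi ^ 2 * t)) := by
  set r : ℝ := Real.exp (-(Real.pi ^ 2 * t)) with hr
  have hπ : (0:ℝ) < Real.pi ^ 2 * t := by positivity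
  have hr0 : 0 < r := Real.exp_pos _
  have hr1 : r < 1 := by
    rw [hr, Real.exp_lt_one_iff]; linarith
  have hsum : Summable (fun n : ℕ => ((n : ℝ) + 1) ^ 2 * r ^ (n + 1)) := by
    have h := summable_pow_mul_geometric_of_norm_lt_one (R := ℝ) 2
      (r := r) (by rw [Real.norm_eq_abs, abs_of_pos hr0]; exact hr1)
    have h2 := h.comp_injective Nat.succ_injective
    refine h2.congr fun n => ?_
    simp only [Function.comp, Nat.succ_eq_add_one]
    push_cast
    ring
  refine Summable.of_nonneg_of_le (fun n => by positivity) (fun n => ?_) hsum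
  have key : Real.exp (-((n : ℝ) + 1) ^ 2 * Real.pi ^ 2 * t) ≤ r ^ (n + 1) := by
    have : r ^ (n + 1) = Real.exp (-(((n:ℝ) + 1) * (Real.pi ^ 2 * t))) := by
      rw [hr, ← Real.exp_nat_mul]
      congr 1
      push_cast; ring
    rw [this, Real.exp_le_exp]
    have hn1 : (1:ℝ) ≤ (n : ℝ) + 1 := by
      have := Nat.cast_nonneg (α := ℝ) n; linarith
    have h2 : ((n:ℝ) + 1) ≤ ((n:ℝ) + 1) ^ 2 := by nlinarith
    nlinarith [mul_le_mul_of_nonneg_right h2 hπ.le]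
  have hn2 : (0:ℝ) ≤ ((n : ℝ) + 1) ^ 2 := by positivity
  exact mul_le_mul_of_nonneg_left key hn2

lemma summable_exp {t : ℝ} (ht : 0 < t) :
    Summable (fun n : ℕ => Real.exp (-((n : ℝ) + 1) ^ 2 * Real.pi ^ 2 * t)) := by
  refine Summable.of_nonneg_of_le (fun n => (Real.exp_pos _).le) (fun n => ?_) (summable_sq_exp ht)
  have hn1 : (1:ℝ) ≤ ((n : ℝ) + 1) ^ 2 := by nlinarith [Nat.cast_nonneg (α := ℝ) n]
  nlinarith [(Real.exp_pos (-((n : ℝ) + 1) ^ 2 * Real.pi ^ 2 * t)).le]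

lemma summable_mul_exp {t : ℝ} (ht : 0 < t) :
    Summable (fun n : ℕ => ((n : ℝ) + 1) * Real.exp (-((n : ℝ) + 1) ^ 2 * Real.pi ^ 2 * t)) := by
  refine Summable.of_nonneg_of_le (fun n => by positivity) (fun n => ?_) (summable_sq_exp ht)
  have hn1 : ((n:ℝ) + 1) ≤ ((n : ℝ) + 1) ^ 2 := by nlinarith [Nat.cast_nonneg (α := ℝ) n]
  nlinarith [(Real.exp_pos (-((n : ℝ) + 1) ^ 2 * Real.pi ^ 2 * t)).le]

lemma summable_abs_term (a b : ℝ) {t : ℝ} (ht : 0 < t) (x : ℝ) :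
    Summable (fun n : ℕ => |heatTerm1D a b (n + 1) x t|) :=
  Summable.of_nonneg_of_le (fun n => abs_nonneg _) (fun n => term_abs_le a b n x t)
    ((summable_exp ht).mul_left 2)

noncomputable def heatDX (a b : ℝ) (n : ℕ) (x t : ℝ) : ℝ :=
  (Real.cos (((n : ℝ) + 1) * Real.pi * a) - Real.cos (((n : ℝ) + 1) * Real.pi * b)) * Real.pi *
    Real.cos (((n : ℝ) + 1) * Real.pi * x) * Real.exp (-((n : ℝ) + 1) ^ 2 * Real.pi ^ 2 * t)

lemma abs_heatDX_le (a b : ℝ) (n : ℕ) (x t : ℝ) :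
    |heatDX a b n x t| ≤ 2 * Real.pi * Real.exp (-((n : ℝ) + 1) ^ 2 * Real.pi ^ 2 * t) := by
  rw [heatDX, abs_mul, abs_mul, abs_mul, Real.abs_exp, abs_of_pos Real.pi_pos]
  calc |Real.cos (((n : ℝ) + 1) * Real.pi * a) - Real.cos (((n : ℝ) + 1) * Real.pi * b)| * Real.pi *
        |Real.cos (((n : ℝ) + 1) * Real.pi * x)| * Real.exp (-((n : ℝ) + 1) ^ 2 * Real.pi ^ 2 * t)
      ≤ 2 * Real.pi * 1 * Real.exp (-((n : ℝ) + 1) ^ 2 * Real.pi ^ 2 * t) := by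
        gcongr
        · exact abs_D_le a b _
        · exact Real.abs_cos_le_one _
    _ = 2 * Real.pi * Real.exp (-((n : ℝ) + 1) ^ 2 * Real.pi ^ 2 * t) := by ring

lemma hasDerivAt_term_x (a b : ℝ) (n : ℕ) (t y : ℝ) :
    HasDerivAt (fun z => heatTerm1D a b (n + 1) z t) (heatDX a b n y t) y := by
  have hfun : (fun z => heatTerm1D a b (n + 1) z t) =
      fun z => (1 / ((n : ℝ) + 1)) *
        (Real.cos (((n : ℝ) + 1) * Real.pi * a) - Real.cos (((n : ℝ) + 1) * Real.pi * b)) *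
        Real.sin (((n : ℝ) + 1) * Real.pi * z) *
        Real.exp (-((n : ℝ) + 1) ^ 2 * Real.pi ^ 2 * t) := by
    funext z; exact term_eq a b n z t
  rw [hfun]
  set k : ℝ := ((n : ℝ) + 1) * Real.pi with hk
  set D : ℝ := Real.cos (((n : ℝ) + 1) * Real.pi * a) - Real.cos (((n : ℝ) + 1) * Real.pi * b) with hD
  set E : ℝ := Real.exp (-((n : ℝ) + 1) ^ 2 * Real.pi ^ 2 * t) with hE
  have hgoal : heatDX a b n y t = D * Real.pi * Real.cos (k * y) * E := rfl
  clear_value k D E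
  have hsin : HasDerivAt (fun z => Real.sin (k * z)) (Real.cos (k * y) * k) y := by
    simpa using (HasDerivAt.sin ((hasDerivAt_id y).const_mul k))
  have h : HasDerivAt (fun z => 1 / ((n : ℝ) + 1) * D * Real.sin (k * z) * E)
      (1 / ((n : ℝ) + 1) * D * (Real.cos (k * y) * k) * E) y := by
    exact ((hsin.const_mul (1 / ((n : ℝ) + 1) * D)).mul_const E).congr_deriv (by ring)
  refine h.congr_deriv ?_
  have hn : ((n : ℝ) + 1) ≠ 0 := by positivity
  rw [hgoal, hk]
  field_simp

lemma hasDerivAt_heatDX (a b : ℝ) (n : ℕ) (t x : ℝ) :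
    HasDerivAt (fun y => heatDX a b n y t)
      (-(((n : ℝ) + 1) ^ 2 * Real.pi ^ 2) * heatTerm1D a b (n + 1) x t) x := by
  have hfun : (fun y => heatDX a b n y t) =
      fun y => (Real.cos (((n : ℝ) + 1) * Real.pi * a) - Real.cos (((n : ℝ) + 1) * Real.pi * b)) *
        Real.pi * Real.cos (((n : ℝ) + 1) * Real.pi * y) *
        Real.exp (-((n : ℝ) + 1) ^ 2 * Real.pi ^ 2 * t) := rfl
  rw [hfun]
  have hterm := term_eq a b n x t
  set k : ℝ := ((n : ℝ) + 1) * Real.pi with hk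
  set D : ℝ := Real.cos (((n : ℝ) + 1) * Real.pi * a) - Real.cos (((n : ℝ) + 1) * Real.pi * b) with hD
  set E : ℝ := Real.exp (-((n : ℝ) + 1) ^ 2 * Real.pi ^ 2 * t) with hE
  clear_value k D E
  have hcos : HasDerivAt (fun y => Real.cos (k * y)) (-Real.sin (k * x) * k) x := by
    simpa using (HasDerivAt.cos ((hasDerivAt_id x).const_mul k))
  have h : HasDerivAt (fun y => D * Real.pi * Real.cos (k * y) * E)
      (D * Real.pi * (-Real.sin (k * x) * k) * E) x :=
    ((hcos.const_mul (D * Real.pi)).mul_const E).congr_deriv (by ring)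
  refine h.congr_deriv ?_
  rw [hterm, hk]
  have hn : ((n : ℝ) + 1) ≠ 0 := by positivity
  field_simp

lemma hasDerivAt_term_t (a b x : ℝ) (n : ℕ) (t : ℝ) :
    HasDerivAt (fun s => heatTerm1D a b (n + 1) x s)
      (-(((n : ℝ) + 1) ^ 2 * Real.pi ^ 2) * heatTerm1D a b (n + 1) x t) t := by
  have hfun : (fun s => heatTerm1D a b (n + 1) x s) =
      fun s => (1 / ((n : ℝ) + 1)) *
        (Real.cos (((n : ℝ) + 1) * Real.pi * a) - Real.cos (((n : ℝ) + 1) * Real.pi * b)) *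
        Real.sin (((n : ℝ) + 1) * Real.pi * x) *
        Real.exp (-((n : ℝ) + 1) ^ 2 * Real.pi ^ 2 * s) := by
    funext s; exact term_eq a b n x s
  rw [hfun]
  have hterm := term_eq a b n x t
  set c : ℝ := -((n : ℝ) + 1) ^ 2 * Real.pi ^ 2 with hc
  set C : ℝ := (1 / ((n : ℝ) + 1)) *
    (Real.cos (((n : ℝ) + 1) * Real.pi * a) - Real.cos (((n : ℝ) + 1) * Real.pi * b)) *
    Real.sin (((n : ℝ) + 1) * Real.pi * x) with hC
  have hexp : HasDerivAt (fun s => Real.exp (c * s)) (Real.exp (c * t) * c) t := by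
    simpa using (HasDerivAt.exp ((hasDerivAt_id t).const_mul c))
  have h : HasDerivAt (fun s => C * Real.exp (c * s)) (C * (Real.exp (c * t) * c)) t :=
    hexp.const_mul C
  have h2 : HasDerivAt (fun s => C * Real.exp (c * s)) (c * (C * Real.exp (c * t))) t :=
    h.congr_deriv (by ring)
  have hfun2 : (fun s => C * Real.exp (c * s)) =
      fun s => C * Real.exp (-((n : ℝ) + 1) ^ 2 * Real.pi ^ 2 * s) := by
    funext s; rw [hc]
  rw [hfun2] at h2
  refine h2.congr_deriv ?_
  rw [hterm, hc, hC]
  ring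

lemma bound_deriv (a b x : ℝ) (n : ℕ) (s : ℝ) :
    |(-(((n : ℝ) + 1) ^ 2 * Real.pi ^ 2)) * heatTerm1D a b (n + 1) x s| ≤
      2 * Real.pi ^ 2 * (((n : ℝ) + 1) * Real.exp (-((n : ℝ) + 1) ^ 2 * Real.pi ^ 2 * s)) := by
  rw [abs_mul, abs_neg, abs_of_nonneg (by positivity : (0:ℝ) ≤ ((n : ℝ) + 1) ^ 2 * Real.pi ^ 2)]
  have h := term_abs_le' a b n x s
  have hn : (0:ℝ) < (n : ℝ) + 1 := by positivity
  calc ((n : ℝ) + 1) ^ 2 * Real.pi ^ 2 * |heatTerm1D a b (n + 1) x s|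
      ≤ ((n : ℝ) + 1) ^ 2 * Real.pi ^ 2 *
        ((1 / ((n : ℝ) + 1)) * 2 * Real.exp (-((n : ℝ) + 1) ^ 2 * Real.pi ^ 2 * s)) := by
        exact mul_le_mul_of_nonneg_left h (by positivity)
    _ = 2 * Real.pi ^ 2 * (((n : ℝ) + 1) * Real.exp (-((n : ℝ) + 1) ^ 2 * Real.pi ^ 2 * s)) := by
        field_simp

lemma term_zero0 (a b : ℝ) (n : ℕ) (t : ℝ) : heatTerm1D a b (n + 1) 0 t = 0 := by
  simp [heatTerm1D]

lemma term_zero1 (a b : ℝ) (n : ℕ) (t : ℝ) : heatTerm1D a b (n + 1) 1 t = 0 := by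
  simp only [heatTerm1D]
  have h : Real.sin (((n + 1 : ℕ) : ℝ) * Real.pi * 1) = 0 := by
    rw [mul_one]; exact Real.sin_nat_mul_pi (n + 1)
  rw [h]; ring

lemma key_x (a b : ℝ) {t : ℝ} (ht : 0 < t) (y : ℝ) :
    HasDerivAt (fun z => ∑' n : ℕ, heatTerm1D a b (n + 1) z t)
      (∑' n : ℕ, heatDX a b n y t) y := by
  refine hasDerivAt_tsum (u := fun n : ℕ => 2 * Real.pi * Real.exp (-((n : ℝ) + 1) ^ 2 * Real.pi ^ 2 * t))
    ((summable_exp ht).mul_left _) (fun n z => hasDerivAt_term_x a b n t z)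
    (fun n z => by rw [Real.norm_eq_abs]; exact abs_heatDX_le a b n z t)
    (y₀ := 0) ?_ y
  refine (summable_zero).congr fun n => ?_
  exact (term_zero0 a b n t).symm

lemma key_xx (a b : ℝ) {t : ℝ} (ht : 0 < t) (x : ℝ) :
    HasDerivAt (fun y => ∑' n : ℕ, heatDX a b n y t)
      (∑' n : ℕ, -(((n : ℝ) + 1) ^ 2 * Real.pi ^ 2) * heatTerm1D a b (n + 1) x t) x := by
  refine hasDerivAt_tsum
    (u := fun n : ℕ => 2 * Real.pi ^ 2 * (((n : ℝ) + 1) * Real.exp (-((n : ℝ) + 1) ^ 2 * Real.pi ^ 2 * t)))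
    ((summable_mul_exp ht).mul_left _) (fun n y => hasDerivAt_heatDX a b n t y)
    (fun n y => by rw [Real.norm_eq_abs]; exact bound_deriv a b y n t)
    (y₀ := 0) ?_ x
  refine Summable.of_norm ?_
  refine Summable.of_nonneg_of_le (fun n => norm_nonneg _) (fun n => ?_)
    ((summable_exp ht).mul_left (2 * Real.pi))
  rw [Real.norm_eq_abs]
  exact abs_heatDX_le a b n 0 t

lemma key_t (a b x : ℝ) {t : ℝ} (ht : 0 < t) :
    HasDerivAt (fun s => ∑' n : ℕ, heatTerm1D a b (n + 1) x s)
      (∑' n : ℕ, -(((n : ℝ) + 1) ^ 2 * Real.pi ^ 2) * heatTerm1D a b (n + 1) x t) t := by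
  have ht2 : 0 < t / 2 := by linarith
  refine hasDerivAt_tsum_of_isPreconnected
    (u := fun n : ℕ => 2 * Real.pi ^ 2 * (((n : ℝ) + 1) * Real.exp (-((n : ℝ) + 1) ^ 2 * Real.pi ^ 2 * (t / 2))))
    ((summable_mul_exp ht2).mul_left _) isOpen_Ioi isPreconnected_Ioi
    (fun n s _ => hasDerivAt_term_t a b x n s)
    (fun n s hs => ?_) (y₀ := t) (show t ∈ Ioi (t / 2) by rw [mem_Ioi]; linarith) ?_ (show t ∈ Ioi (t / 2) by rw [mem_Ioi]; linarith)
  · rw [Real.norm_eq_abs]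
    refine (bound_deriv a b x n s).trans ?_
    have hmon : Real.exp (-((n : ℝ) + 1) ^ 2 * Real.pi ^ 2 * s) ≤
        Real.exp (-((n : ℝ) + 1) ^ 2 * Real.pi ^ 2 * (t / 2)) := by
      rw [Real.exp_le_exp]
      have hs' : t / 2 ≤ s := le_of_lt hs
      nlinarith [sq_nonneg ((n : ℝ) + 1), sq_nonneg Real.pi,
        mul_le_mul_of_nonneg_left hs' (by positivity : (0:ℝ) ≤ ((n : ℝ) + 1) ^ 2 * Real.pi ^ 2)]
    have hn : (0:ℝ) ≤ (n : ℝ) + 1 := by positivity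
    have hp : (0:ℝ) ≤ 2 * Real.pi ^ 2 := by positivity
    nlinarith [mul_le_mul_of_nonneg_left hmon hn]
  · exact (summable_abs_term a b ht x).of_abs


/-- For every `t > 0` the series converges absolutely for all `x`, and the resulting
function solves the 1D heat equation on `(0,1)` with homogeneous Dirichlet boundary
conditions at `x = 0` and `x = 1`. -/
theorem heatSol1D_solves_heat_equation
    (a b : ℝ) (ha : 0 ≤ a) (hab : a < b) (hb : b ≤ 1) :
    (∀ t : ℝ, 0 < t → ∀ x : ℝ, Summable (fun n : ℕ => |heatTerm1D a b (n + 1) x t|)) ∧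
    (∀ x ∈ Ioo (0:ℝ) 1, ∀ t : ℝ, 0 < t →
      deriv (fun s => heatSol1D a b x s) t
        - deriv (fun y => deriv (fun z => heatSol1D a b z t) y) x = 0) ∧
    (∀ t : ℝ, 0 < t → heatSol1D a b 0 t = 0 ∧ heatSol1D a b 1 t = 0) := by
  refine ⟨fun t ht x => summable_abs_term a b ht x, ?_, ?_⟩
  · intro x hx t ht
    set S : ℝ := ∑' n : ℕ, -(((n : ℝ) + 1) ^ 2 * Real.pi ^ 2) * heatTerm1D a b (n + 1) x t with hS
    have h1 : HasDerivAt (fun s => heatSol1D a b x s) ((2 / Real.pi) * S) t := by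
      simp only [heatSol1D]
      exact HasDerivAt.const_mul (2 / Real.pi) (key_t a b x ht)
    have h2 : (fun y => deriv (fun z => heatSol1D a b z t) y) =
        fun y => (2 / Real.pi) * ∑' n : ℕ, heatDX a b n y t := by
      funext y
      have h' : HasDerivAt (fun z => heatSol1D a b z t)
          ((2 / Real.pi) * ∑' n : ℕ, heatDX a b n y t) y := by
        simp only [heatSol1D]
        exact HasDerivAt.const_mul (2 / Real.pi) (key_x a b ht y)
      exact h'.deriv
    have h3 : HasDerivAt (fun y => (2 / Real.pi) * ∑' n : ℕ, heatDX a b n y t)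
        ((2 / Real.pi) * S) x :=
      HasDerivAt.const_mul (2 / Real.pi) (key_xx a b ht x)
    rw [h1.deriv, h2, h3.deriv, sub_self]
  · intro t ht
    constructor
    · simp only [heatSol1D]
      rw [tsum_congr (fun n => term_zero0 a b n t), tsum_zero, mul_zero]
    · simp only [heatSol1D]
      rw [tsum_congr (fun n => term_zero1 a b n t), tsum_zero, mul_zero]
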